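/- arXiv:1309.0125 — 5 statements merged into one kernel-verified Lean document; each statement's English description precedes it below -/
import Mathlib

section
/- Let φ : [0, ∞) → [0, ∞) be a quasi-concave function (φ(0) = 0, φ(t) > 0 for t > 0, φ nondecreasing, and t ↦ φ(t)/t nonincreasing on (0, ∞)) satisfying the Δ₂ condition globally: there exists K > 0 with φ(Kx) ≥ 2φ(x) for all x ≥ 0. Then there exists ε > 0 such that for all 0 < y ≤ 1, all 0 < p ≤ ε, and all x > 0, φ(yx) ≤ 2·y^p·φ(x). -/
/-- If a quasi-concave function `φ` satisfies the `Δ₂` condition globally, then there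
is `ε > 0` such that `φ(yx) ≤ 2·y^p·φ(x)` for all `0 < y ≤ 1`, `0 < p ≤ ε`, `x > 0`. -/
theorem quasiconcave_delta2_growth
    (φ : ℝ → ℝ)
    (h0 : φ 0 = 0)
    (hpos : ∀ t : ℝ, 0 < t → 0 < φ t)
    (hmono : MonotoneOn φ (Set.Ici (0 : ℝ)))
    (hqc : AntitoneOn (fun t => φ t / t) (Set.Ioi (0 : ℝ)))
    (K : ℝ) (hK : 0 < K)
    (hΔ₂ : ∀ x : ℝ, 0 ≤ x → 2 * φ x ≤ φ (K * x)) :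
    ∃ ε : ℝ, 0 < ε ∧ ∀ y : ℝ, 0 < y → y ≤ 1 → ∀ p : ℝ, 0 < p → p ≤ ε →
      ∀ x : ℝ, 0 < x → φ (y * x) ≤ 2 * y ^ p * φ x := by
  -- K must exceed 1
  have hK1 : 1 < K := by
    by_contra h
    push_neg at h
    have h1 : φ K ≤ φ 1 := hmono (le_of_lt hK) (by norm_num) h
    have h2 : 2 * φ 1 ≤ φ (K * 1) := hΔ₂ 1 (by norm_num)
    rw [mul_one] at h2
    have := hpos 1 one_pos
    linarith
  have hlogK : 0 < Real.log K := Real.log_pos hK1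
  -- iterate Δ₂
  have key : ∀ n : ℕ, ∀ x : ℝ, 0 ≤ x → φ (x / K ^ n) ≤ φ x / 2 ^ n := by
    intro n
    induction n with
    | zero => intro x hx; simp
    | succ n ih =>
      intro x hx
      have hKn : (0:ℝ) < K ^ n := pow_pos hK n
      have e1 : x / K ^ (n + 1) = (x / K) / K ^ n := by
        rw [div_div, pow_succ, mul_comm]
      have h1 : φ ((x / K) / K ^ n) ≤ φ (x / K) / 2 ^ n :=
        ih (x / K) (by positivity)
      have h2 : 2 * φ (x / K) ≤ φ (K * (x / K)) := hΔ₂ (x / K) (by positivity)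
      rw [mul_div_cancel₀ _ (ne_of_gt hK)] at h2
      have h2n : (0:ℝ) < 2 ^ n := by positivity
      calc φ (x / K ^ (n + 1)) = φ ((x / K) / K ^ n) := by rw [e1]
      _ ≤ φ (x / K) / 2 ^ n := h1
      _ ≤ (φ x / 2) / 2 ^ n := by gcongr; linarith
      _ = φ x / 2 ^ (n + 1) := by rw [div_div, pow_succ, mul_comm]
  refine ⟨Real.log 2 / Real.log K, by positivity, ?_⟩
  intro y hy hy1 p hp hpε x hx
  set n : ℕ := ⌊(-Real.log y) / Real.log K⌋₊ with hn
  have hly : Real.log y ≤ 0 := Real.log_nonpos (le_of_lt hy) hy1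
  have hn1 : (n : ℝ) ≤ (-Real.log y) / Real.log K :=
    Nat.floor_le (div_nonneg (by linarith) (le_of_lt hlogK))
  have hn2 : (-Real.log y) / Real.log K < n + 1 := Nat.lt_floor_add_one _
  have hn1' : (n : ℝ) * Real.log K ≤ -Real.log y := (le_div_iff₀ hlogK).mp hn1
  have hn2' : -Real.log y < ((n : ℝ) + 1) * Real.log K := by
    have := (div_lt_iff₀ hlogK).mp hn2
    linarith
  have hKn : (0:ℝ) < K ^ n := pow_pos hK n
  -- y ≤ (K^n)⁻¹
  have hyKn : y * K ^ n ≤ 1 := by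
    have hpos' : (0:ℝ) < y * K ^ n := by positivity
    have hl : Real.log (y * K ^ n) ≤ 0 := by
      rw [Real.log_mul (ne_of_gt hy) (ne_of_gt hKn), Real.log_pow]
      push_cast
      linarith
    have := Real.exp_le_one_iff.mpr hl
    rwa [Real.exp_log hpos'] at this
  have hyx : y * x ≤ x / K ^ n := by
    rw [le_div_iff₀ hKn]
    nlinarith
  have step1 : φ (y * x) ≤ φ (x / K ^ n) :=
    hmono (Set.mem_Ici.mpr (by positivity)) (Set.mem_Ici.mpr (by positivity)) hyx
  have step2 : φ (x / K ^ n) ≤ φ x / 2 ^ n := key n x (le_of_lt hx)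
  -- y ^ p ≥ (2^(n+1))⁻¹
  have hplogK : p * Real.log K ≤ Real.log 2 := (le_div_iff₀ hlogK).mp hpε
  have hyp : ((2:ℝ) ^ (n + 1))⁻¹ ≤ y ^ p := by
    rw [Real.rpow_def_of_pos hy]
    have h2pow : ((2:ℝ) ^ (n + 1))⁻¹ = Real.exp (-(((n:ℝ) + 1) * Real.log 2)) := by
      have hl : ((n:ℝ) + 1) * Real.log 2 = Real.log ((2:ℝ) ^ (n + 1)) := by
        rw [Real.log_pow]; push_cast; ring
      rw [Real.exp_neg, hl, Real.exp_log (by positivity)]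
    rw [h2pow]
    apply Real.exp_le_exp.mpr
    have h1 : -(p * ((n:ℝ) + 1) * Real.log K) ≤ p * Real.log y := by
      nlinarith
    nlinarith
  have hφx := hpos x hx
  have h2n : (0:ℝ) < 2 ^ n := by positivity
  have hfinal : φ x / 2 ^ n ≤ 2 * y ^ p * φ x := by
    have h1 : φ x / 2 ^ n = 2 * ((2:ℝ) ^ (n+1))⁻¹ * φ x := by
      rw [pow_succ]
      field_simp
    rw [h1]
    have : 2 * ((2:ℝ) ^ (n+1))⁻¹ ≤ 2 * y ^ p := by linarith
    nlinarith
  linarith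
end

section
/- Let (Ω, μ) be a measure space, X and Y rearrangement-invariant Banach function spaces over Ω with φ_Y the fundamental function of Y, and (T_n) a sequence of linear operators on X. Define T(f) = sup_n |T_n(f)|. Suppose (1) there is a dense subset D ⊆ X such that for every f ∈ D, the sequence (T_n(f)(ω)) converges for μ-a.e. ω, and (2) there is β > 0 such that sup_{λ>0} λ·φ_Y(μ({ω : T(f)(ω) > λ})) ≤ β·‖f‖_X for all f ∈ X. Then for every f ∈ X, the sequence (T_n(f)(ω)) converges for μ-a.e. ω ∈ Ω. -/
open MeasureTheory
open scoped ENNReal NNReal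

/-- Banach principle for r.i. BFSs: if the linear operators `T_n` converge a.e. on a
dense subset `D` of `X`, and the maximal operator `T f = sup_n |T_n f|` is of weak
type `(X,Y)` (with fundamental function `φ_Y`), then `(T_n f)` converges a.e. for
every `f ∈ X`. -/
theorem banach_principle_riBFS
    {Ω : Type*} [MeasurableSpace Ω] (μ : Measure Ω)
    (X : Set (Ω → ℝ)) (N : (Ω → ℝ) → ℝ≥0∞)
    (Tn : ℕ → (Ω → ℝ) → (Ω → ℝ))
    (hadd : ∀ n f g, Tn n (f + g) = fun ω => Tn n f ω + Tn n g ω)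
    (hsmul : ∀ n (c : ℝ) f, Tn n (c • f) = fun ω => c * Tn n f ω)
    (hmeas : ∀ n f, f ∈ X → Measurable (Tn n f))
    (φY : ℝ≥0∞ → ℝ≥0∞)
    (h0 : φY 0 = 0)
    (hposY : ∀ t : ℝ≥0∞, 0 < t → 0 < φY t)
    (hmonoY : Monotone φY)
    (hqcY : AntitoneOn (fun t => φY t / t) (Set.Ioi (0 : ℝ≥0∞)))
    (D : Set (Ω → ℝ)) (hDX : D ⊆ X)
    (hXsub : ∀ f ∈ X, ∀ g ∈ D, f - g ∈ X)
    (hdense : ∀ f ∈ X, ∀ ε : ℝ≥0∞, 0 < ε → ∃ g ∈ D, N (f - g) < ε)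
    (hDconv : ∀ f ∈ D, ∀ᵐ ω ∂μ, ∃ L : ℝ, Filter.Tendsto (fun n => Tn n f ω)
      Filter.atTop (nhds L))
    (β : ℝ≥0∞) (hβ : 0 < β) (hβfin : β < ⊤)
    (hweak : ∀ f ∈ X, ∀ lam : ℝ, 0 < lam →
      ENNReal.ofReal lam *
        φY (μ {ω | ENNReal.ofReal lam < ⨆ n, (‖Tn n f ω‖₊ : ℝ≥0∞)}) ≤ β * N f) :
    ∀ f ∈ X, ∀ᵐ ω ∂μ, ∃ L : ℝ, Filter.Tendsto (fun n => Tn n f ω)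
      Filter.atTop (nhds L) := by
  intro f hf
  -- For each ε > 0, the set where the oscillation exceeds ε is null.
  have key : ∀ ε : ℝ, 0 < ε →
      μ {ω | ∀ Nk : ℕ, ∃ n ≥ Nk, ∃ m ≥ Nk, ε < |Tn n f ω - Tn m f ω|} = 0 := by
    intro ε hε
    set S := {ω | ∀ Nk : ℕ, ∃ n ≥ Nk, ∃ m ≥ Nk, ε < |Tn n f ω - Tn m f ω|} with hS
    by_contra hne
    have hδ : 0 < μ S := pos_iff_ne_zero.mpr hne
    set a := ENNReal.ofReal (ε / 4) * min (φY (μ S)) 1 with ha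
    have hε4 : (0:ℝ) < ε / 4 := by linarith
    have hofr : ENNReal.ofReal (ε / 4) ≠ 0 := by
      simp [ENNReal.ofReal_eq_zero]; linarith
    have hmin0 : (0:ℝ≥0∞) < min (φY (μ S)) 1 := lt_min (hposY _ hδ) one_pos
    have ha0 : a ≠ 0 := by
      exact (ENNReal.mul_pos hofr hmin0.ne').ne'
    have hatop : a ≠ ⊤ :=
      ENNReal.mul_ne_top ENNReal.ofReal_ne_top
        (ne_top_of_le_ne_top ENNReal.one_ne_top (min_le_right _ _))
    set η := a / 2 / β with hη
    have hη0 : 0 < η := by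
      apply ENNReal.div_pos _ hβfin.ne
      simpa using (ENNReal.half_pos ha0).ne'
    obtain ⟨g, hgD, hgN⟩ := hdense f hf η hη0
    have hfg : f - g ∈ X := hXsub f hf g hgD
    set W := {ω | ENNReal.ofReal (ε / 4) < ⨆ n, (‖Tn n (f - g) ω‖₊ : ℝ≥0∞)} with hW
    have hdec : ∀ k ω, Tn k f ω = Tn k (f - g) ω + Tn k g ω := by
      intro k ω
      have h := hadd k (f - g) g
      rw [sub_add_cancel] at h
      exact congrFun h ω
    have hsub : ∀ᵐ ω ∂μ, ω ∈ S → ω ∈ W := by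
      filter_upwards [hDconv g hgD] with ω hωg hωS
      by_contra hWc
      have hle : (⨆ n, (‖Tn n (f - g) ω‖₊ : ℝ≥0∞)) ≤ ENNReal.ofReal (ε / 4) :=
        not_lt.mp hWc
      have hbnd : ∀ n, |Tn n (f - g) ω| ≤ ε / 4 := by
        intro n
        have h1 : (‖Tn n (f - g) ω‖₊ : ℝ≥0∞) ≤ ENNReal.ofReal (ε / 4) :=
          le_trans (le_iSup (fun n => (‖Tn n (f - g) ω‖₊ : ℝ≥0∞)) n) hle
        rw [← enorm_eq_nnnorm, ← ofReal_norm_eq_enorm, Real.norm_eq_abs] at h1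
        exact (ENNReal.ofReal_le_ofReal_iff hε4.le).mp h1
      obtain ⟨L, hL⟩ := hωg
      have hC : CauchySeq (fun n => Tn n g ω) := hL.cauchySeq
      rw [Metric.cauchySeq_iff] at hC
      obtain ⟨Nk, hNk⟩ := hC (ε / 2) (by linarith)
      obtain ⟨n, hn, m, hm, hlt⟩ := hωS Nk
      have hdist : |Tn n g ω - Tn m g ω| < ε / 2 := by
        have := hNk n hn m hm
        rwa [Real.dist_eq] at this
      have habs : |Tn n f ω - Tn m f ω| ≤
          |Tn n (f - g) ω| + |Tn m (f - g) ω| + |Tn n g ω - Tn m g ω| := by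
        rw [hdec n ω, hdec m ω]
        have e1 : Tn n (f - g) ω + Tn n g ω - (Tn m (f - g) ω + Tn m g ω)
            = (Tn n (f - g) ω - Tn m (f - g) ω) + (Tn n g ω - Tn m g ω) := by ring
        rw [e1]
        calc |(Tn n (f - g) ω - Tn m (f - g) ω) + (Tn n g ω - Tn m g ω)|
            ≤ |Tn n (f - g) ω - Tn m (f - g) ω| + |Tn n g ω - Tn m g ω| := abs_add_le _ _
          _ ≤ (|Tn n (f - g) ω| + |Tn m (f - g) ω|) + |Tn n g ω - Tn m g ω| := by
              gcongr
              exact abs_sub _ _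
      have := hbnd n
      have := hbnd m
      linarith
    have hμSW : μ S ≤ μ W := measure_mono_ae hsub
    have h1 : ENNReal.ofReal (ε / 4) * φY (μ S) ≤ ENNReal.ofReal (ε / 4) * φY (μ W) :=
      mul_le_mul_right (hmonoY hμSW) _
    have h2 : ENNReal.ofReal (ε / 4) * φY (μ W) ≤ β * N (f - g) := hweak (f - g) hfg (ε / 4) hε4
    have h3 : β * N (f - g) ≤ β * η := mul_le_mul_right hgN.le _
    have h4 : β * η = a / 2 := ENNReal.mul_div_cancel hβ.ne' hβfin.ne
    have h5 : a / 2 < a := ENNReal.half_lt_self ha0 hatop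
    have h6 : a ≤ ENNReal.ofReal (ε / 4) * φY (μ S) :=
      mul_le_mul_right (min_le_left _ _) _
    have : a < a := lt_of_le_of_lt (h6.trans (h1.trans (h2.trans h3))) (h4 ▸ h5)
    exact absurd this (lt_irrefl a)
  have hae : ∀ᵐ ω ∂μ, ∀ k : ℕ,
      ω ∉ {ω | ∀ Nk : ℕ, ∃ n ≥ Nk, ∃ m ≥ Nk, 1 / ((k:ℝ) + 1) < |Tn n f ω - Tn m f ω|} := by
    rw [ae_all_iff]
    intro k
    have hk : (0:ℝ) < 1 / ((k:ℝ) + 1) := by positivity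
    exact measure_eq_zero_iff_ae_notMem.mp (key _ hk)
  filter_upwards [hae] with ω hω
  have hC : CauchySeq (fun n => Tn n f ω) := by
    rw [Metric.cauchySeq_iff]
    intro ε hε
    obtain ⟨k, hk⟩ := exists_nat_one_div_lt hε
    have h := hω k
    push_neg at h
    obtain ⟨Nk, hNk⟩ := h
    refine ⟨Nk, fun n hn m hm => ?_⟩
    rw [Real.dist_eq]
    exact lt_of_le_of_lt (hNk n hn m hm) hk
  exact cauchySeq_tendsto_of_complete hC
end

section
/- Let Φ be a Young's function satisfying the Δ' condition: Φ(st) ≤ c₀·Φ(s)·Φ(t) for all s, t ≥ 0 and some c₀ > 0, with Φ(t) > 0 for all t > 0, and let φ(t) = 1/Φ⁻¹(1/t) be the associated fundamental function. Then for every measurable g on a measure space with 0 < ∫ Φ(|g|) dμ < ∞, the Luxemburg norm satisfies ‖g‖_{L^Φ} ≤ φ(c₀·∫ Φ(|g|) dμ). -/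
open MeasureTheory
open scoped ENNReal NNReal

/-- The Luxemburg norm of `f` in the Orlicz space determined by `Φ`. -/
noncomputable def luxemburgNorm {Ω : Type*} [MeasurableSpace Ω] (μ : Measure Ω)
    (Φ : ℝ → ℝ) (f : Ω → ℝ) : ℝ≥0∞ :=
  sInf {r : ℝ≥0∞ | ∃ k : ℝ, 0 < k ∧ r = ENNReal.ofReal k⁻¹ ∧
    ∫⁻ x, ENNReal.ofReal (Φ (k * |f x|)) ∂μ ≤ 1}

/-- For a Young's function `Φ` satisfying the `Δ'` condition
`Φ(st) ≤ c₀·Φ(s)·Φ(t)` and with inverse `Φ⁻¹`, every measurable `g` with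
`0 < ∫ Φ(|g|) dμ < ∞` satisfies `‖g‖_{L^Φ} ≤ φ(c₀·∫Φ(|g|)dμ)`, where the fundamental
function is `φ(t) = 1/Φ⁻¹(1/t)`. -/
theorem luxemburg_norm_le_fundamental_of_deltaPrime
    {Ω : Type*} [MeasurableSpace Ω] (μ : Measure Ω)
    (Φ Φinv : ℝ → ℝ)
    (hΦ0 : Φ 0 = 0)
    (hΦpos : ∀ t : ℝ, 0 < t → 0 < Φ t)
    (hΦmono : MonotoneOn Φ (Set.Ici (0 : ℝ)))
    (hΦconv : ConvexOn ℝ (Set.Ici (0 : ℝ)) Φ)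
    (hinv_nonneg : ∀ t : ℝ, 0 ≤ t → 0 ≤ Φinv t)
    (hleft : ∀ t : ℝ, 0 ≤ t → Φ (Φinv t) = t)
    (hright : ∀ t : ℝ, 0 ≤ t → Φinv (Φ t) = t)
    (c₀ : ℝ) (hc₀ : 0 < c₀)
    (hΔ' : ∀ s t : ℝ, 0 ≤ s → 0 ≤ t → Φ (s * t) ≤ c₀ * Φ s * Φ t)
    (g : Ω → ℝ) (hg : Measurable g)
    (hpos : 0 < ∫⁻ x, ENNReal.ofReal (Φ |g x|) ∂μ)
    (hfin : ∫⁻ x, ENNReal.ofReal (Φ |g x|) ∂μ < ⊤) :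
    luxemburgNorm μ Φ g ≤
      ENNReal.ofReal
        (1 / Φinv (1 / (c₀ * (∫⁻ x, ENNReal.ofReal (Φ |g x|) ∂μ).toReal))) := by
  set J := ∫⁻ x, ENNReal.ofReal (Φ |g x|) ∂μ with hJ
  have hJne : J ≠ ⊤ := hfin.ne
  have hIpos : 0 < J.toReal := ENNReal.toReal_pos hpos.ne' hJne
  set I := J.toReal with hI
  set M := c₀ * I with hM
  have hMpos : 0 < M := mul_pos hc₀ hIpos
  set k := Φinv (1 / M) with hk
  have hinvMpos : 0 < 1 / M := by positivity
  have hkpos : 0 < k := by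
    rcases lt_or_eq_of_le (hinv_nonneg _ hinvMpos.le) with h | h
    · exact h
    · exfalso
      have := hleft (1 / M) hinvMpos.le
      rw [← h, hΦ0] at this
      exact hinvMpos.ne this
  have hΦk : Φ k = 1 / M := hleft _ hinvMpos.le
  have hkey : ∫⁻ x, ENNReal.ofReal (Φ (k * |g x|)) ∂μ ≤ 1 := by
    have hstep : ∀ x, ENNReal.ofReal (Φ (k * |g x|)) ≤
        ENNReal.ofReal (c₀ * Φ k) * ENNReal.ofReal (Φ |g x|) := by
      intro x
      rw [← ENNReal.ofReal_mul (mul_nonneg hc₀.le (by rw [hΦk]; positivity))]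
      exact ENNReal.ofReal_le_ofReal
        (by simpa [mul_assoc] using hΔ' k |g x| hkpos.le (abs_nonneg _))
    calc ∫⁻ x, ENNReal.ofReal (Φ (k * |g x|)) ∂μ
        ≤ ∫⁻ x, ENNReal.ofReal (c₀ * Φ k) * ENNReal.ofReal (Φ |g x|) ∂μ :=
          lintegral_mono hstep
      _ = ENNReal.ofReal (c₀ * Φ k) * J := lintegral_const_mul' _ _ ENNReal.ofReal_ne_top
      _ ≤ 1 := by
          have : c₀ * Φ k = I⁻¹ := by
            rw [hΦk, hM, one_div, mul_inv, ← mul_assoc, mul_inv_cancel₀ hc₀.ne', one_mul]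
          rw [this, ENNReal.ofReal_inv_of_pos hIpos, hI, ENNReal.ofReal_toReal hJne]
          rw [ENNReal.inv_mul_cancel hpos.ne' hJne]
  have hmem : ENNReal.ofReal k⁻¹ ∈ {r : ℝ≥0∞ | ∃ k : ℝ, 0 < k ∧ r = ENNReal.ofReal k⁻¹ ∧
      ∫⁻ x, ENNReal.ofReal (Φ (k * |g x|)) ∂μ ≤ 1} :=
    ⟨k, hkpos, rfl, hkey⟩
  have := csInf_le (OrderBot.bddBelow _) hmem
  simpa [luxemburgNorm, one_div, hk, hM, hI, hJ] using this
end

section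
/- Let G be an abelian σ-compact locally compact group acting measure-preservingly on a σ-finite measure space (Ω, μ), with the induced action on L¹(Ω) point-norm continuous. Let Φ be a Young's function satisfying Δ₂ globally with Φ(t) > 0 for t > 0, let E ⊆ Ω have finite measure, and let (V_m) be a decreasing sequence of compact neighborhoods of the identity with sup_{t ∈ V_m} ‖α_t(χ_E) − χ_E‖_{L¹} ≤ 1/m. Set ψ_m = (1/h(V_m))·χ_{V_m} and α_{ψ_m}(χ_E)(ω) = ∫_G χ_E(α_t(ω))·ψ_m(t) dt. Then ∫_Ω Φ(|α_{ψ_m}(χ_E) − χ_E|) dμ ≤ Φ(1)/m, and hence α_{ψ_m}(χ_E) → χ_E in the Luxemburg norm of L^Φ(Ω). -/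
open MeasureTheory Filter
open scoped ENNReal NNReal

/-- Averaging `χ_E` over shrinking neighbourhoods `V_m`: the modular distance to `χ_E`
is at most `Φ(1)/m`, and hence `α_{ψ_m}(χ_E) → χ_E` in the Luxemburg norm of `L^Φ`. -/
theorem average_indicator_modular_convergence
    {Ω G : Type*} [MeasurableSpace Ω] [MeasurableSpace G]
    [CommGroup G] [TopologicalSpace G] [IsTopologicalGroup G]
    [LocallyCompactSpace G] [SigmaCompactSpace G]
    (μ : Measure Ω) [SigmaFinite μ] (ν : Measure G) [SigmaFinite ν]
    (α : G → Ω → Ω)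
    (hmp : ∀ t : G, MeasurePreserving (α t) μ μ)
    (hjm : Measurable (fun p : Ω × G => α p.2 p.1))
    (hcont : ∀ g : Ω → ℝ, Integrable g μ →
      Tendsto (fun t : G => ∫⁻ ω, (‖g (α t ω) - g ω‖₊ : ℝ≥0∞) ∂μ)
        (nhds 1) (nhds 0))
    (Φ : ℝ → ℝ)
    (hΦ0 : Φ 0 = 0)
    (hΦpos : ∀ t : ℝ, 0 < t → 0 < Φ t)
    (hΦconv : ConvexOn ℝ (Set.Ici (0 : ℝ)) Φ)
    (hΦmono : MonotoneOn Φ (Set.Ici (0 : ℝ)))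
    (C : ℝ) (hC : 0 < C) (hΔ₂ : ∀ t : ℝ, 0 ≤ t → Φ (2 * t) ≤ C * Φ t)
    (E : Set Ω) (hE : MeasurableSet E) (hEfin : μ E < ⊤)
    (V : ℕ → Set G)
    (hVmeas : ∀ m, MeasurableSet (V m))
    (hVcpt : ∀ m, IsCompact (V m))
    (hVnbhd : ∀ m, V m ∈ nhds (1 : G))
    (hVdec : Antitone V)
    (hVpos : ∀ m, 0 < ν (V m)) (hVfin : ∀ m, ν (V m) < ⊤)
    (happrox : ∀ m : ℕ, 1 ≤ m → ∀ t ∈ V m,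
      ∫⁻ ω, (‖Set.indicator E (fun _ => (1 : ℝ)) (α t ω) -
        Set.indicator E (fun _ => (1 : ℝ)) ω‖₊ : ℝ≥0∞) ∂μ ≤
          ENNReal.ofReal (1 / m)) :
    (∀ m : ℕ, 1 ≤ m →
      ∫⁻ ω, ENNReal.ofReal (Φ
        |(ν (V m)).toReal⁻¹ *
            (∫ t in V m, Set.indicator E (fun _ => (1 : ℝ)) (α t ω) ∂ν) -
          Set.indicator E (fun _ => (1 : ℝ)) ω|) ∂μ ≤
        ENNReal.ofReal (Φ 1 / m)) ∧
    Tendsto (fun m : ℕ =>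
      luxemburgNorm μ Φ (fun ω =>
        (ν (V m)).toReal⁻¹ *
            (∫ t in V m, Set.indicator E (fun _ => (1 : ℝ)) (α t ω) ∂ν) -
          Set.indicator E (fun _ => (1 : ℝ)) ω))
      atTop (nhds 0) := by
  classical
  set f : Ω → ℝ := Set.indicator E (fun _ => (1 : ℝ)) with hfdef
  have hf : Measurable f := measurable_const.indicator hE
  have hf01 : ∀ x, f x = 0 ∨ f x = 1 := by
    intro x
    by_cases hx : x ∈ E
    · right; simp [hfdef, Set.indicator_of_mem hx]
    · left; simp [hfdef, Set.indicator_of_notMem hx]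
  have hd1 : ∀ (ω : Ω) (t : G), |f (α t ω) - f ω| ≤ 1 := by
    intro ω t
    rcases hf01 (α t ω) with h1 | h1 <;> rcases hf01 ω with h2 | h2 <;>
      simp [h1, h2]
  -- measurability of the sections
  have hFm : Measurable (fun p : Ω × G => f (α p.2 p.1)) := hf.comp hjm
  have hsec : ∀ ω : Ω, Measurable (fun t : G => f (α t ω)) := fun ω =>
    hFm.comp measurable_prodMk_left
  -- the Δ₂ iteration
  have hiter : ∀ (j : ℕ) (t : ℝ), 0 ≤ t → Φ (2 ^ j * t) ≤ C ^ j * Φ t := by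
    intro j
    induction j with
    | zero => intro t ht; simp
    | succ n ih =>
        intro t ht
        have he : (2 : ℝ) ^ (n + 1) * t = 2 ^ n * (2 * t) := by ring
        rw [he]
        calc Φ (2 ^ n * (2 * t)) ≤ C ^ n * Φ (2 * t) := ih (2 * t) (by linarith)
          _ ≤ C ^ n * (C * Φ t) :=
            mul_le_mul_of_nonneg_left (hΔ₂ t ht) (pow_nonneg hC.le n)
          _ = C ^ (n + 1) * Φ t := by ring
  have hΦ1 : (0 : ℝ) ≤ Φ 1 := (hΦpos 1 one_pos).le
  -- Part 1 : the modular bound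
  have part1 : ∀ m : ℕ, 1 ≤ m →
      ∫⁻ ω, ENNReal.ofReal (Φ
        |(ν (V m)).toReal⁻¹ * (∫ t in V m, f (α t ω) ∂ν) - f ω|) ∂μ ≤
        ENNReal.ofReal (Φ 1 / m) := by
    intro m hm
    have hνne : ν (V m) ≠ 0 := (hVpos m).ne'
    have hνtop : ν (V m) ≠ ⊤ := (hVfin m).ne
    set c : ℝ := (ν (V m)).toReal with hcdef
    have hcpos : 0 < c := ENNReal.toReal_pos hνne hνtop
    haveI : IsFiniteMeasure (ν.restrict (V m)) :=
      ⟨by rw [Measure.restrict_apply_univ]; exact hVfin m⟩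
    -- integrability of sections
    have hint1 : ∀ ω : Ω, Integrable (fun t => f (α t ω)) (ν.restrict (V m)) := by
      intro ω
      refine (integrable_const (1 : ℝ)).mono' (hsec ω).aestronglyMeasurable ?_
      refine Filter.Eventually.of_forall fun t => ?_
      rcases hf01 (α t ω) with h | h <;> simp [h]
    have hintd : ∀ ω : Ω, Integrable (fun t => |f (α t ω) - f ω|) (ν.restrict (V m)) :=
      fun ω => ((hint1 ω).sub (integrable_const _)).abs
    -- pointwise bound by D ω
    have hDbound : ∀ ω : Ω,
        |c⁻¹ * (∫ t in V m, f (α t ω) ∂ν) - f ω| ≤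
          c⁻¹ * ∫ t in V m, |f (α t ω) - f ω| ∂ν := by
      intro ω
      have hsub : (∫ t in V m, (f (α t ω) - f ω) ∂ν) =
          (∫ t in V m, f (α t ω) ∂ν) - c * f ω := by
        rw [integral_sub (hint1 ω) (integrable_const _)]
        simp [setIntegral_const, smul_eq_mul, hcdef, Measure.real_def]
      have heq : c⁻¹ * (∫ t in V m, f (α t ω) ∂ν) - f ω =
          c⁻¹ * (∫ t in V m, (f (α t ω) - f ω) ∂ν) := by
        rw [hsub]
        field_simp
      rw [heq, abs_mul, abs_of_nonneg (inv_nonneg.2 hcpos.le)]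
      refine mul_le_mul_of_nonneg_left ?_ (inv_nonneg.2 hcpos.le)
      simpa [Real.norm_eq_abs] using
        norm_integral_le_integral_norm (μ := ν.restrict (V m))
          (fun t => f (α t ω) - f ω)
    have hDnonneg : ∀ ω : Ω,
        0 ≤ c⁻¹ * ∫ t in V m, |f (α t ω) - f ω| ∂ν := fun ω =>
      mul_nonneg (inv_nonneg.2 hcpos.le) (integral_nonneg fun t => abs_nonneg _)
    have hDle1 : ∀ ω : Ω, c⁻¹ * (∫ t in V m, |f (α t ω) - f ω| ∂ν) ≤ 1 := by
      intro ω
      have h1 : (∫ t in V m, |f (α t ω) - f ω| ∂ν) ≤ ∫ _t in V m, (1 : ℝ) ∂ν :=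
        integral_mono (hintd ω) (integrable_const _) fun t => hd1 ω t
      have h2 : (∫ _t in V m, (1 : ℝ) ∂ν) = c := by
        simp [setIntegral_const, hcdef, Measure.real_def]
      calc c⁻¹ * (∫ t in V m, |f (α t ω) - f ω| ∂ν) ≤ c⁻¹ * c := by
            refine mul_le_mul_of_nonneg_left ?_ (inv_nonneg.2 hcpos.le)
            rw [← h2]; exact h1
        _ = 1 := inv_mul_cancel₀ hcpos.ne'
    -- pointwise Φ bound
    have hΦpt : ∀ ω : Ω,
        Φ |c⁻¹ * (∫ t in V m, f (α t ω) ∂ν) - f ω| ≤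
          Φ 1 * (c⁻¹ * ∫ t in V m, |f (α t ω) - f ω| ∂ν) := by
      intro ω
      have h1 : Φ |c⁻¹ * (∫ t in V m, f (α t ω) ∂ν) - f ω| ≤
          Φ (c⁻¹ * ∫ t in V m, |f (α t ω) - f ω| ∂ν) :=
        hΦmono (Set.mem_Ici.2 (abs_nonneg _)) (Set.mem_Ici.2 (hDnonneg ω)) (hDbound ω)
      have h2 : Φ (c⁻¹ * ∫ t in V m, |f (α t ω) - f ω| ∂ν) ≤
          Φ 1 * (c⁻¹ * ∫ t in V m, |f (α t ω) - f ω| ∂ν) := by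
        have hc := hΦconv.2 (Set.mem_Ici.2 zero_le_one) (Set.mem_Ici.2 le_rfl)
          (hDnonneg ω) (by linarith [hDle1 ω])
          (by ring : (c⁻¹ * ∫ t in V m, |f (α t ω) - f ω| ∂ν) +
            (1 - (c⁻¹ * ∫ t in V m, |f (α t ω) - f ω| ∂ν)) = 1)
        simp only [smul_eq_mul, mul_one, mul_zero, add_zero, hΦ0] at hc
        linarith
      linarith
    -- integrate
    calc ∫⁻ ω, ENNReal.ofReal (Φ |c⁻¹ * (∫ t in V m, f (α t ω) ∂ν) - f ω|) ∂μ
        ≤ ∫⁻ ω, ENNReal.ofReal (Φ 1 * (c⁻¹ * ∫ t in V m, |f (α t ω) - f ω| ∂ν)) ∂μ :=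
          lintegral_mono fun ω => ENNReal.ofReal_le_ofReal (hΦpt ω)
      _ = ∫⁻ ω, (ENNReal.ofReal (Φ 1) * (ν (V m))⁻¹) *
            (∫⁻ t in V m, (‖f (α t ω) - f ω‖₊ : ℝ≥0∞) ∂ν) ∂μ := by
          refine lintegral_congr fun ω => ?_
          rw [ENNReal.ofReal_mul hΦ1, ENNReal.ofReal_mul (inv_nonneg.2 hcpos.le)]
          have hcinv : ENNReal.ofReal c⁻¹ = (ν (V m))⁻¹ := by
            rw [hcdef, ← ENNReal.toReal_inv,
              ENNReal.ofReal_toReal (ENNReal.inv_ne_top.2 hνne)]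
          have habs : ENNReal.ofReal (∫ t in V m, |f (α t ω) - f ω| ∂ν) =
              ∫⁻ t in V m, (‖f (α t ω) - f ω‖₊ : ℝ≥0∞) ∂ν := by
            rw [ofReal_integral_eq_lintegral_ofReal (hintd ω)
              (Filter.Eventually.of_forall fun t => abs_nonneg _)]
            refine lintegral_congr fun t => ?_
            exact (Real.enorm_eq_ofReal_abs _).symm
          rw [hcinv, habs, mul_assoc]
      _ = (ENNReal.ofReal (Φ 1) * (ν (V m))⁻¹) *
            ∫⁻ ω, (∫⁻ t in V m, (‖f (α t ω) - f ω‖₊ : ℝ≥0∞) ∂ν) ∂μ :=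
          lintegral_const_mul' _ _
            (ENNReal.mul_ne_top ENNReal.ofReal_ne_top (ENNReal.inv_ne_top.2 hνne))
      _ = (ENNReal.ofReal (Φ 1) * (ν (V m))⁻¹) *
            ∫⁻ t in V m, (∫⁻ ω, (‖f (α t ω) - f ω‖₊ : ℝ≥0∞) ∂μ) ∂ν := by
          rw [lintegral_lintegral_swap]
          exact ((hFm.sub (hf.comp measurable_fst)).nnnorm.coe_nnreal_ennreal).aemeasurable
      _ ≤ (ENNReal.ofReal (Φ 1) * (ν (V m))⁻¹) *
            ∫⁻ _t in V m, ENNReal.ofReal (1 / m) ∂ν := by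
          refine mul_le_mul_right ?_ _
          refine setLIntegral_mono measurable_const fun t ht => ?_
          exact happrox m hm t ht
      _ = (ENNReal.ofReal (Φ 1) * (ν (V m))⁻¹) * (ENNReal.ofReal (1 / m) * ν (V m)) := by
          rw [setLIntegral_const]
      _ = ENNReal.ofReal (Φ 1) * ENNReal.ofReal (1 / m) *
            ((ν (V m))⁻¹ * ν (V m)) := by ring
      _ = ENNReal.ofReal (Φ 1 / m) := by
          rw [ENNReal.inv_mul_cancel hνne hνtop, mul_one,
            ← ENNReal.ofReal_mul hΦ1, mul_one_div]
  refine ⟨part1, ?_⟩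
  -- Part 2 : convergence in the Luxemburg norm
  rw [ENNReal.tendsto_nhds_zero]
  intro ε hε
  obtain ⟨j, hj⟩ := ENNReal.exists_inv_two_pow_lt hε.ne'
  set k : ℝ := 2 ^ j with hkdef
  have hkpos : 0 < k := by positivity
  obtain ⟨M, hM⟩ := exists_nat_ge (C ^ j * Φ 1)
  filter_upwards [eventually_ge_atTop (max 1 M)] with m hmge
  have hm1 : 1 ≤ m := le_trans (le_max_left _ _) hmge
  have hmM : (M : ℝ) ≤ m := by exact_mod_cast le_trans (le_max_right _ _) hmge
  have hmpos : (0 : ℝ) < m := by exact_mod_cast hm1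
  -- the modular of k times the difference is at most 1
  have hmod : ∫⁻ x, ENNReal.ofReal (Φ (k *
      |(ν (V m)).toReal⁻¹ * (∫ t in V m, f (α t x) ∂ν) - f x|)) ∂μ ≤ 1 := by
    have hpt : ∀ x : Ω, ENNReal.ofReal (Φ (k *
        |(ν (V m)).toReal⁻¹ * (∫ t in V m, f (α t x) ∂ν) - f x|)) ≤
        ENNReal.ofReal (C ^ j) * ENNReal.ofReal
          (Φ |(ν (V m)).toReal⁻¹ * (∫ t in V m, f (α t x) ∂ν) - f x|) := by
      intro x
      rw [← ENNReal.ofReal_mul (by positivity)]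
      exact ENNReal.ofReal_le_ofReal (hiter j _ (abs_nonneg _))
    calc ∫⁻ x, ENNReal.ofReal (Φ (k *
          |(ν (V m)).toReal⁻¹ * (∫ t in V m, f (α t x) ∂ν) - f x|)) ∂μ
        ≤ ∫⁻ x, ENNReal.ofReal (C ^ j) * ENNReal.ofReal
            (Φ |(ν (V m)).toReal⁻¹ * (∫ t in V m, f (α t x) ∂ν) - f x|) ∂μ :=
          lintegral_mono hpt
      _ = ENNReal.ofReal (C ^ j) * ∫⁻ x, ENNReal.ofReal
            (Φ |(ν (V m)).toReal⁻¹ * (∫ t in V m, f (α t x) ∂ν) - f x|) ∂μ :=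
          lintegral_const_mul' _ _ ENNReal.ofReal_ne_top
      _ ≤ ENNReal.ofReal (C ^ j) * ENNReal.ofReal (Φ 1 / m) :=
          mul_le_mul_right (part1 m hm1) _
      _ ≤ 1 := by
          rw [← ENNReal.ofReal_mul (by positivity)]
          refine ENNReal.ofReal_le_one.2 ?_
          rw [mul_div_assoc'] at *
          rw [div_le_one hmpos]
          linarith
  have hle : luxemburgNorm μ Φ (fun ω =>
      (ν (V m)).toReal⁻¹ * (∫ t in V m, f (α t ω) ∂ν) - f ω) ≤
      ENNReal.ofReal k⁻¹ := sInf_le ⟨k, hkpos, rfl, hmod⟩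
  refine hle.trans ?_
  have : ENNReal.ofReal k⁻¹ = (2 : ℝ≥0∞)⁻¹ ^ j := by
    rw [hkdef, ENNReal.ofReal_inv_of_pos hkpos, ENNReal.ofReal_pow (by norm_num),
      ENNReal.ofReal_ofNat, ← ENNReal.inv_pow]
  rw [this]
  exact hj.le
end

section
/- Let (Ω, μ) be a σ-finite measure space, G a σ-compact locally compact group acting measure-preservingly on Ω, T a transferable operator which is semilocal with neighborhood U (if supp(f) ⊆ V then supp(T f) ⊆ VU) and right-translation invariant, and suppose T commutes appropriately with the action. For f ∈ L¹(Ω) + L^∞(Ω), set F(ω, t) = f(α_t(ω)) and F'(ω, t) = T(F_ω)(t). Then for all s, t ∈ G and almost all ω ∈ Ω, F'(α_s(ω), t) = F'(ω, ts); consequently, for any t₁, t₂ ∈ G, the functions ω ↦ F'(ω, t₁) and ω ↦ F'(ω, t₂) are equimeasurable on (Ω, μ). -/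
open MeasureTheory
open scoped ENNReal NNReal Pointwise

/-- For a transferable (semilocal, right-translation-invariant) operator `T` and
`F(ω,t) = f(α_t ω)`, `F'(ω,t) = T(F_ω)(t)`, one has `F'(α_s ω, t) = F'(ω, ts)` for
all `s, t` and all `ω`; consequently the functions `ω ↦ F'(ω,t₁)` and `ω ↦ F'(ω,t₂)`
are equimeasurable. -/
theorem transferred_equimeasurable
    {Ω G : Type*} [MeasurableSpace Ω] [MeasurableSpace G] [Group G]
    (μ : Measure Ω) [SigmaFinite μ]
    (α : G → Ω → Ω)
    (hmp : ∀ t : G, MeasurePreserving (α t) μ μ)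
    (hjm : Measurable (fun p : Ω × G => α p.2 p.1))
    (haction : ∀ (t s : G) (ω : Ω), α t (α s ω) = α (t * s) ω)
    (T : (G → ℝ) → (G → ℝ))
    (U : Set G)
    (hsemi : ∀ (g : G → ℝ) (V : Set G), (∀ x ∉ V, g x = 0) →
      ∀ x ∉ V * U, T g x = 0)
    (htrans : ∀ (g : G → ℝ) (t : G), T (fun s => g (s * t)) = fun s => T g (s * t))
    (f : Ω → ℝ) (hf : Measurable f)
    (hmem : ∃ g₁ g₂ : Ω → ℝ, f = g₁ + g₂ ∧ Measurable g₁ ∧ Measurable g₂ ∧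
      eLpNorm g₁ 1 μ < ⊤ ∧ eLpNorm g₂ ⊤ μ < ⊤)
    (hFmeas : ∀ t : G, Measurable (fun ω => T (fun u => f (α u ω)) t)) :
    (∀ (s : G) (ω : Ω) (t : G),
      T (fun u => f (α u (α s ω))) t = T (fun u => f (α u ω)) (t * s)) ∧
    (∀ t₁ t₂ : G, ∀ lam : ℝ, 0 < lam →
      μ {ω | lam < |T (fun u => f (α u ω)) t₁|} =
      μ {ω | lam < |T (fun u => f (α u ω)) t₂|}) := by
  have key : ∀ (s : G) (ω : Ω) (t : G),
      T (fun u => f (α u (α s ω))) t = T (fun u => f (α u ω)) (t * s) := by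
    intro s ω t
    have h1 : (fun u => f (α u (α s ω))) = fun u => (fun v => f (α v ω)) (u * s) := by
      funext u; rw [haction]
    rw [h1]; exact congrFun (htrans (fun v => f (α v ω)) s) t
  refine ⟨key, fun t₁ t₂ lam _ => ?_⟩
  set s := t₁⁻¹ * t₂ with hs
  have hset : {ω | lam < |T (fun u => f (α u ω)) t₂|}
      = (α s) ⁻¹' {ω | lam < |T (fun u => f (α u ω)) t₁|} := by
    ext ω
    simp only [Set.mem_setOf_eq, Set.mem_preimage]
    rw [key s ω t₁]
    have : t₁ * s = t₂ := mul_inv_cancel_left t₁ t₂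
    rw [this]
  rw [hset, (hmp s).measure_preimage]
  exact (measurableSet_lt measurable_const ((hFmeas t₁).abs)).nullMeasurableSet
end
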